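/- arXiv:1803.05703 — 4 statements merged into one kernel-verified Lean document; each statement's English description precedes it below -/
import Mathlib

section
/- Let A_n, n = 1, 2, …, be events in a probability space (Ω, F, P), and let A be the set of ω ∈ Ω contained in infinitely many of the A_n (i.e., A = limsup_n A_n). If ∑_{n=1}^∞ P(A_n) = ∞, then P(A) ≥ limsup_{N→∞} (∑_{n=1}^N P(A_n))² / ∑_{1 ≤ m,n ≤ N} P(A_m ∩ A_n). -/
open MeasureTheory Filter Finset Topology

open scoped ENNReal

/-- The Chung–Erdős inequality: for finitely many events,
`(∑ P(A n))² ≤ (∑∑ P(A m ∩ A n)) * P(⋃ A n)`. -/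
lemma chung_erdos_aux {Ω : Type*} [MeasurableSpace Ω] (P : Measure Ω)
    (A : ℕ → Set Ω) (hA : ∀ n, MeasurableSet (A n)) (s : Finset ℕ) :
    (∑ n ∈ s, P (A n)) ^ 2 ≤
      (∑ m ∈ s, ∑ n ∈ s, P (A m ∩ A n)) * P (⋃ n ∈ s, A n) := by
  set f : Ω → ℝ≥0∞ := fun ω => ∑ n ∈ s, (A n).indicator 1 ω with hf
  set U : Set Ω := ⋃ n ∈ s, A n with hU
  have hUm : MeasurableSet U := MeasurableSet.biUnion (s.countable_toSet) fun n _ => hA n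
  have hfm : Measurable f :=
    Finset.measurable_sum _ fun n _ => measurable_one.indicator (hA n)
  set g : Ω → ℝ≥0∞ := U.indicator 1 with hg
  have hgm : Measurable g := measurable_one.indicator hUm
  have hfg : ∀ ω, (f * g) ω = f ω := by
    intro ω
    by_cases hω : ω ∈ U
    · simp [hg, Set.indicator_of_mem hω]
    · have : f ω = 0 := Finset.sum_eq_zero fun n hn =>
        Set.indicator_of_notMem (fun hmem => hω (Set.mem_biUnion hn hmem)) _
      simp [this]
  have h1 : ∫⁻ ω, f ω ∂P = ∑ n ∈ s, P (A n) := by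
    rw [hf]
    rw [lintegral_finset_sum _ fun n _ => measurable_one.indicator (hA n)]
    exact Finset.sum_congr rfl fun n _ => lintegral_indicator_one (hA n)
  have hsq : ∀ x : ℝ≥0∞, x ^ (2 : ℝ) = x ^ (2 : ℕ) := fun x => by
    rw [← ENNReal.rpow_natCast]; norm_num
  have h2 : ∫⁻ ω, f ω ^ (2 : ℝ) ∂P = ∑ m ∈ s, ∑ n ∈ s, P (A m ∩ A n) := by
    have hpt : ∀ ω, f ω ^ (2 : ℝ) = ∑ m ∈ s, ∑ n ∈ s, (A m ∩ A n).indicator 1 ω := by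
      intro ω
      rw [hsq, sq, hf, Finset.sum_mul_sum]
      refine Finset.sum_congr rfl fun m _ => Finset.sum_congr rfl fun n _ => ?_
      rw [← Set.inter_indicator_mul]
      simp only [Pi.one_apply, mul_one, ← Pi.one_def]
    simp_rw [hpt]
    rw [lintegral_finset_sum _ fun m _ =>
      Finset.measurable_sum _ fun n _ => measurable_one.indicator ((hA m).inter (hA n))]
    refine Finset.sum_congr rfl fun m _ => ?_
    rw [lintegral_finset_sum _ fun n _ => measurable_one.indicator ((hA m).inter (hA n))]
    exact Finset.sum_congr rfl fun n _ => lintegral_indicator_one ((hA m).inter (hA n))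
  have h3 : ∫⁻ ω, g ω ^ (2 : ℝ) ∂P = P U := by
    have hpt : ∀ ω, g ω ^ (2 : ℝ) = g ω := by
      intro ω
      by_cases hω : ω ∈ U
      · simp [hg, Set.indicator_of_mem hω]
      · simp [hg, Set.indicator_of_notMem hω, ENNReal.zero_rpow_of_pos (by norm_num : (0:ℝ) < 2)]
    simp_rw [hpt]
    exact lintegral_indicator_one hUm
  have hCS := ENNReal.lintegral_mul_le_Lp_mul_Lq P
    Real.HolderConjugate.two_two
    hfm.aemeasurable hgm.aemeasurable
  simp_rw [hfg] at hCS
  rw [h1, h2, h3] at hCS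
  have hkey : ∀ x : ℝ≥0∞, (x ^ (1/2 : ℝ)) ^ (2 : ℕ) = x := fun x => by
    rw [← ENNReal.rpow_natCast, ← ENNReal.rpow_mul]; norm_num
  calc (∑ n ∈ s, P (A n)) ^ 2
      ≤ ((∑ m ∈ s, ∑ n ∈ s, P (A m ∩ A n)) ^ (1/2 : ℝ) * P U ^ (1/2 : ℝ)) ^ 2 :=
        pow_le_pow_left' hCS 2
    _ = (∑ m ∈ s, ∑ n ∈ s, P (A m ∩ A n)) * P U := by
        rw [mul_pow, hkey, hkey]

/-- A version of the second Borel–Cantelli lemma: if the events `A_1, A_2, …` in a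
probability space satisfy `∑ P(A_n) = ∞`, then the probability of the limsup set is at
least `limsup_N (∑_{n=1}^N P(A_n))² / ∑_{1 ≤ m,n ≤ N} P(A_m ∩ A_n)`. -/
theorem borel_cantelli_second
    {Ω : Type*} [MeasurableSpace Ω] (P : Measure Ω) [IsProbabilityMeasure P]
    (A : ℕ → Set Ω) (hA : ∀ n, MeasurableSet (A n))
    (hdiv : (∑' n : ℕ, P (A (n + 1))) = ⊤) :
    P {ω | ∃ᶠ n in atTop, ω ∈ A n} ≥
      limsup (fun N : ℕ =>
        (∑ n ∈ Finset.Icc 1 N, P (A n)) ^ 2 /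
          ∑ m ∈ Finset.Icc 1 N, ∑ n ∈ Finset.Icc 1 N, P (A m ∩ A n)) atTop := by
  set S : ℕ → ℝ≥0∞ := fun N => ∑ n ∈ Finset.Icc 1 N, P (A n) with hSdef
  set D : ℕ → ℝ≥0∞ := fun N => ∑ m ∈ Finset.Icc 1 N, ∑ n ∈ Finset.Icc 1 N, P (A m ∩ A n)
    with hDdef
  have hset : {ω | ∃ᶠ n in atTop, ω ∈ A n} = ⋂ K, ⋃ n, ⋃ (_ : K ≤ n), A n := by
    ext ω
    simp only [Set.mem_setOf_eq, frequently_atTop, Set.mem_iInter, Set.mem_iUnion,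
      exists_prop]
  have hU : ∀ K : ℕ, MeasurableSet (⋃ n, ⋃ (_ : K ≤ n), A n) :=
    fun K => MeasurableSet.iUnion fun n => MeasurableSet.iUnion fun _ => hA n
  rw [ge_iff_le, hset, Antitone.measure_iInter
    (fun K K' h => Set.iUnion₂_subset fun n hn =>
      Set.subset_iUnion₂ (s := fun n (_ : K ≤ n) => A n) n (h.trans hn))
    (fun K => (hU K).nullMeasurableSet) ⟨0, measure_ne_top P _⟩]
  refine le_iInf fun K => ?_
  -- S tends to infinity
  have hStop : Tendsto S atTop (𝓝 ⊤) := by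
    have heq : ∀ N, S N = ∑ i ∈ Finset.range N, P (A (i + 1)) := by
      intro N
      show (∑ n ∈ Finset.Icc 1 N, P (A n)) = _
      rw [← Finset.Ico_add_one_right_eq_Icc, Finset.sum_Ico_eq_sum_range]
      rw [Nat.add_sub_cancel]
      exact Finset.sum_congr rfl fun i _ => by rw [add_comm]
    have := ENNReal.tendsto_nat_tsum (fun i => P (A (i + 1)))
    rw [hdiv] at this
    exact this.congr fun N => (heq N).symm
  refine ENNReal.le_of_forall_lt_one_mul_le fun a ha => ?_
  rcases eq_or_ne a 0 with rfl | ha0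
  · simp
  set b : ℝ≥0∞ := a ^ (1/2 : ℝ) with hb
  have hatop : a ≠ ⊤ := (ha.trans_le le_top).ne
  have hb1 : b < 1 := ENNReal.rpow_lt_one ha (by norm_num)
  have hbb : b * b = a := by
    rw [hb, ← ENNReal.rpow_add _ _ ha0 hatop]; norm_num
  set c : ℝ≥0∞ := S K with hc
  have hcne : c ≠ ⊤ :=
    (ENNReal.sum_lt_top.2 fun n _ => measure_lt_top P _).ne
  have h1b : (1 : ℝ≥0∞) - b ≠ 0 := (tsub_pos_of_lt hb1).ne'
  have hMne : c / (1 - b) ≠ ⊤ :=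
    (ENNReal.div_lt_top hcne h1b).ne
  have ev1 : ∀ᶠ N in atTop, c / (1 - b) < S N :=
    hStop.eventually (lt_mem_nhds hMne.lt_top)
  have ev2 : ∀ᶠ N in atTop, K ≤ N := eventually_ge_atTop K
  have ev : ∀ᶠ N in atTop,
      a * (S N ^ 2 / D N) ≤ P (⋃ n, ⋃ (_ : K ≤ n), A n) := by
    filter_upwards [ev1, ev2] with N h1 h2
    -- c ≤ (1 - b) * S N
    have hcS : c ≤ (1 - b) * S N := by
      calc c = (1 - b) * (c / (1 - b)) :=
            (ENNReal.mul_div_cancel h1b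
              (tsub_le_self.trans_lt ENNReal.one_lt_top).ne).symm
        _ ≤ (1 - b) * S N := mul_le_mul_right h1.le _
    set T : ℝ≥0∞ := ∑ n ∈ Finset.Ioc K N, P (A n) with hT
    have e1 : ∀ x, Finset.Icc 1 x = Finset.Ioc 0 x := fun x => by
      ext y; simp only [Finset.mem_Icc, Finset.mem_Ioc]; omega
    have hsplit : S N = c + T := by
      show (∑ n ∈ Finset.Icc 1 N, P (A n)) =
        (∑ n ∈ Finset.Icc 1 K, P (A n)) + ∑ n ∈ Finset.Ioc K N, P (A n)
      rw [e1 N, e1 K]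
      exact (Finset.sum_Ioc_consecutive _ (Nat.zero_le K) h2).symm
    have hbT : b * S N ≤ T := by
      have hSle : b * S N + c ≤ T + c := by
        calc b * S N + c ≤ b * S N + (1 - b) * S N := add_le_add_right hcS _
          _ = (b + (1 - b)) * S N := (add_mul _ _ _).symm
          _ = S N := by rw [add_tsub_cancel_of_le hb1.le, one_mul]
          _ = T + c := by rw [hsplit, add_comm]
      exact (ENNReal.add_le_add_iff_right hcne).1 hSle
    have hCE := chung_erdos_aux P A hA (Finset.Ioc K N)
    have hsub : Finset.Ioc K N ⊆ Finset.Icc 1 N := by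
      intro x hx
      simp only [Finset.mem_Icc, Finset.mem_Ioc] at *
      omega
    have hDD : (∑ m ∈ Finset.Ioc K N, ∑ n ∈ Finset.Ioc K N, P (A m ∩ A n)) ≤ D N := by
      calc (∑ m ∈ Finset.Ioc K N, ∑ n ∈ Finset.Ioc K N, P (A m ∩ A n))
          ≤ ∑ m ∈ Finset.Ioc K N, ∑ n ∈ Finset.Icc 1 N, P (A m ∩ A n) :=
            Finset.sum_le_sum fun m _ => Finset.sum_le_sum_of_subset hsub
        _ ≤ D N := Finset.sum_le_sum_of_subset hsub
    have hUsub : (⋃ n ∈ Finset.Ioc K N, A n) ⊆ ⋃ n, ⋃ (_ : K ≤ n), A n := by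
      refine Set.iUnion₂_subset fun n hn => ?_
      exact Set.subset_iUnion₂ (s := fun n (_ : K ≤ n) => A n) n
        (Finset.mem_Ioc.1 hn).1.le
    have hT2 : T ^ 2 ≤ P (⋃ n, ⋃ (_ : K ≤ n), A n) * D N := by
      calc T ^ 2 ≤ (∑ m ∈ Finset.Ioc K N, ∑ n ∈ Finset.Ioc K N, P (A m ∩ A n)) *
            P (⋃ n ∈ Finset.Ioc K N, A n) := hCE
        _ ≤ D N * P (⋃ n, ⋃ (_ : K ≤ n), A n) :=
            mul_le_mul' hDD (measure_mono hUsub)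
        _ = P (⋃ n, ⋃ (_ : K ≤ n), A n) * D N := mul_comm _ _
    calc a * (S N ^ 2 / D N) = (a * S N ^ 2) / D N := (mul_div_assoc _ _ _).symm
      _ = (b * S N) ^ 2 / D N := by rw [mul_pow, ← hbb, ← sq]
      _ ≤ T ^ 2 / D N := ENNReal.div_le_div_right (pow_le_pow_left' hbT 2) _
      _ ≤ P (⋃ n, ⋃ (_ : K ≤ n), A n) := ENNReal.div_le_of_le_mul hT2
  calc a * limsup (fun N => S N ^ 2 / D N) atTop
      = limsup (fun N => a * (S N ^ 2 / D N)) atTop :=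
        (ENNReal.limsup_const_mul_of_ne_top hatop).symm
    _ ≤ P (⋃ n, ⋃ (_ : K ≤ n), A n) := limsup_le_of_le (by isBoundedDefault) ev
end

section
/- There is an absolute constant C > 0 such that for every integer q ≥ 3 and every integer k ≥ 1, ∏_{p prime, p | q, p > e^k} (1 − 1/p)^{−1} ≤ C · max(1, (log log q)/k). -/
set_option maxHeartbeats 1000000


open Finset


lemma prod_primePow_dvd (e : ℕ → ℕ) (n : ℕ) :
    ∀ (s : Finset ℕ), (∀ p ∈ s, p.Prime) → (∀ p ∈ s, p ^ e p ∣ n) →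
    (∏ p ∈ s, p ^ e p) ∣ n := by
  classical
  intro s
  induction s using Finset.induction_on with
  | empty => intro _ _; simp
  | @insert p s hp ih =>
    intro hs hd
    rw [Finset.prod_insert hp]
    have hps : p.Prime := hs p (mem_insert_self _ _)
    refine Nat.Coprime.mul_dvd_of_dvd_of_dvd ?_ (hd p (mem_insert_self _ _))
      (ih (fun r hr => hs r (mem_insert_of_mem hr)) (fun r hr => hd r (mem_insert_of_mem hr)))
    refine Nat.Coprime.pow_left _ ?_
    rw [Nat.coprime_prod_right_iff]
    intro q hq
    exact ((Nat.coprime_primes hps (hs q (mem_insert_of_mem hq))).2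
      (fun h => hp (h ▸ hq))).pow_right _

lemma pow_div_dvd_factorial {p m : ℕ} (hp : p.Prime) : p ^ (m / p) ∣ m.factorial := by
  rcases lt_or_ge m p with h | h
  · simp [Nat.div_eq_of_lt h]
  · rw [hp.pow_dvd_factorial_iff (Nat.lt_succ_self _)]
    have h1 : (1 : ℕ) ∈ Finset.Ico 1 (Nat.log p m + 1) := by
      simp only [Finset.mem_Ico]
      exact ⟨le_refl _, by
        have := Nat.log_pos hp.one_lt h
        omega⟩
    calc m / p = m / p ^ 1 := by rw [pow_one]
      _ ≤ ∑ i ∈ Finset.Ico 1 (Nat.log p m + 1), m / p ^ i :=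
        Finset.single_le_sum (f := fun i => m / p ^ i) (fun i _ => Nat.zero_le _) h1

lemma theta_le (m : ℕ) :
    ∑ p ∈ (Finset.range (m+1)).filter Nat.Prime, Real.log p ≤ m * Real.log 4 := by
  have h1 : Real.log (primorial m : ℝ) =
      ∑ p ∈ (Finset.range (m+1)).filter Nat.Prime, Real.log p := by
    rw [primorial, Nat.cast_prod, Real.log_prod]
    intro x hx
    exact_mod_cast (Nat.Prime.pos (mem_filter.1 hx).2).ne'
  rw [← h1]
  calc Real.log (primorial m : ℝ) ≤ Real.log ((4:ℝ)^m) := by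
        apply Real.log_le_log (by exact_mod_cast primorial_pos m)
        exact_mod_cast primorial_le_4_pow m
    _ = m * Real.log 4 := by rw [Real.log_pow]

lemma T_le {m : ℕ} (hm : 1 ≤ m) :
    ∑ p ∈ (Finset.range (m+1)).filter Nat.Prime, Real.log p / p ≤
      Real.log m + Real.log 4 := by
  set S := (Finset.range (m+1)).filter Nat.Prime with hS
  have hprime : ∀ p ∈ S, p.Prime := fun p hp => (mem_filter.1 hp).2
  -- the product of p^(m/p) divides m!
  have hD : (∏ p ∈ S, p ^ (m / p)) ∣ m.factorial :=
    prod_primePow_dvd _ _ S hprime (fun p hp => pow_div_dvd_factorial (hprime p hp))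
  have hDle : ((∏ p ∈ S, p ^ (m / p) : ℕ) : ℝ) ≤ (m.factorial : ℝ) := by
    exact_mod_cast Nat.le_of_dvd m.factorial_pos hD
  have h1 : ∑ p ∈ S, ((m / p : ℕ) : ℝ) * Real.log p ≤ Real.log m.factorial := by
    have hlogD : Real.log ((∏ p ∈ S, p ^ (m / p) : ℕ) : ℝ) =
        ∑ p ∈ S, ((m / p : ℕ) : ℝ) * Real.log p := by
      rw [Nat.cast_prod, Real.log_prod]
      · refine Finset.sum_congr rfl fun p hp => ?_
        rw [Nat.cast_pow, Real.log_pow]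
      · intro p hp
        exact_mod_cast (pow_pos (hprime p hp).pos _).ne'
    rw [← hlogD]
    apply Real.log_le_log ?_ hDle
    exact_mod_cast Finset.prod_pos fun p hp => pow_pos (hprime p hp).pos _
  have hfact : Real.log m.factorial ≤ m * Real.log m := by
    calc Real.log m.factorial ≤ Real.log ((m : ℝ) ^ m) := by
          apply Real.log_le_log (by exact_mod_cast m.factorial_pos)
          exact_mod_cast Nat.factorial_le_pow m
      _ = m * Real.log m := Real.log_pow m m
  -- pointwise: m * (log p / p) ≤ (m/p) * log p + log p
  have h2 : ∀ p ∈ S, (m : ℝ) * (Real.log p / p) ≤ ((m / p : ℕ) : ℝ) * Real.log p + Real.log p := by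
    intro p hp
    have hp2 := (hprime p hp).two_le
    have hppos : (0 : ℝ) < p := by exact_mod_cast (hprime p hp).pos
    have hlognn : (0:ℝ) ≤ Real.log p := Real.log_natCast_nonneg p
    have hdiv : (m : ℝ) / p ≤ ((m / p : ℕ) : ℝ) + 1 := by
      rw [div_le_iff₀ hppos]
      have : m < p * (m / p) + p := by
        have := Nat.div_add_mod m p
        have := Nat.mod_lt m (show 0 < p from (hprime p hp).pos)
        omega
      have h' : (m:ℝ) < (p:ℝ) * ((m/p : ℕ):ℝ) + (p:ℝ) := by exact_mod_cast this
      nlinarith [h']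
    calc (m : ℝ) * (Real.log p / p) = ((m:ℝ)/p) * Real.log p := by ring
      _ ≤ (((m / p : ℕ) : ℝ) + 1) * Real.log p := by
          apply mul_le_mul_of_nonneg_right hdiv hlognn
      _ = ((m / p : ℕ) : ℝ) * Real.log p + Real.log p := by ring
  have h3 : (m:ℝ) * ∑ p ∈ S, Real.log p / p ≤ (m:ℝ) * (Real.log m + Real.log 4) := by
    rw [Finset.mul_sum]
    calc ∑ p ∈ S, (m:ℝ) * (Real.log p / p)
        ≤ ∑ p ∈ S, (((m / p : ℕ) : ℝ) * Real.log p + Real.log p) :=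
          Finset.sum_le_sum h2
      _ = (∑ p ∈ S, ((m / p : ℕ) : ℝ) * Real.log p) + ∑ p ∈ S, Real.log p :=
          Finset.sum_add_distrib
      _ ≤ m * Real.log m + m * Real.log 4 := by
          refine add_le_add (h1.trans hfact) ?_
          exact theta_le m
      _ = (m:ℝ) * (Real.log m + Real.log 4) := by ring
  have hmpos : (0:ℝ) < m := by exact_mod_cast hm
  exact le_of_mul_le_mul_left h3 hmpos


lemma one_lt_log {x : ℝ} (hx : 3 ≤ x) : 1 < Real.log x := by
  rw [Real.lt_log_iff_exp_lt (by linarith)]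
  calc Real.exp 1 < 2.7182818286 := Real.exp_one_lt_d9
    _ ≤ x := by linarith

lemma log4_le : Real.log 4 ≤ 1.4 := by
  have h : Real.log 4 = 2 * Real.log 2 := by
    rw [show (4:ℝ) = 2^2 by norm_num, Real.log_pow]
    push_cast; ring
  have := Real.log_two_lt_d9
  rw [h]; linarith

lemma tele (g : ℕ → ℝ) {m M : ℕ} (h : m ≤ M) :
    ∑ n ∈ Finset.Ico m M, (g n - g (n+1)) = g m - g M := by
  rw [Finset.sum_Ico_eq_sub _ h, Finset.sum_range_sub' g, Finset.sum_range_sub' g]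
  ring

lemma sum_inv_primes_le {a N : ℕ} (ha : 3 ≤ a) (haN : a ≤ N) :
    ∑ p ∈ (Finset.Icc a N).filter Nat.Prime, ((p:ℝ))⁻¹ ≤
      Real.log (Real.log N) - Real.log (Real.log a) + 5 := by
  classical
  set g : ℕ → ℝ := fun n => (Real.log n)⁻¹ with hg
  set Pr := (Finset.Icc a N).filter Nat.Prime with hPr
  have hmem : ∀ p ∈ Pr, p.Prime ∧ a ≤ p ∧ p ≤ N := by
    intro p hp
    rw [hPr, mem_filter, Finset.mem_Icc] at hp
    exact ⟨hp.2, hp.1.1, hp.1.2⟩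
  have hlogn : ∀ n : ℕ, 3 ≤ n → 1 < Real.log n := by
    intro n hn
    exact one_lt_log (by exact_mod_cast hn)
  have hlogN : 1 < Real.log N := hlogn N (ha.trans haN)
  have hloga : 1 < Real.log a := hlogn a ha
  -- pointwise decomposition of 1/p via telescoping of 1/log
  have hsplit : ∀ p ∈ Pr, (p:ℝ)⁻¹ =
      Real.log p / p * g N +
      ∑ n ∈ Finset.Ico a N, (if p ≤ n then Real.log p / p * (g n - g (n+1)) else 0) := by
    intro p hp
    obtain ⟨hpp, hap, hpN⟩ := hmem p hp
    have hp3 : 3 ≤ p := le_trans ha hap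
    have hlogp : 1 < Real.log p := hlogn p hp3
    have hIco : (Finset.Ico a N).filter (fun n => p ≤ n) = Finset.Ico p N := by
      ext n
      simp only [mem_filter, Finset.mem_Ico]
      omega
    have hsum : ∑ n ∈ Finset.Ico a N, (if p ≤ n then Real.log p / p * (g n - g (n+1)) else 0)
        = Real.log p / p * (g p - g N) := by
      rw [← Finset.sum_filter, hIco, ← Finset.mul_sum, tele g hpN]
    rw [hsum]
    have hppos : (0:ℝ) < p := by positivity
    have : Real.log p / p * g N + Real.log p / p * (g p - g N) = Real.log p / p * g p := by
      ring
    rw [this, hg]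
    field_simp
  rw [Finset.sum_congr rfl hsplit, Finset.sum_add_distrib]
  -- boundary term
  have hT : ∀ m : ℕ, 3 ≤ m → ∀ (s : Finset ℕ), (∀ p ∈ s, p.Prime ∧ p ≤ m) →
      ∑ p ∈ s, Real.log p / p ≤ Real.log m + Real.log 4 := by
    intro m hm s hs
    refine le_trans (Finset.sum_le_sum_of_subset_of_nonneg ?_ ?_) (T_le (by omega))
    · intro p hp
      rw [mem_filter, Finset.mem_range]
      exact ⟨by have := (hs p hp).2; omega, (hs p hp).1⟩
    · intro p _ _
      have h0 : (0:ℝ) ≤ Real.log p := Real.log_natCast_nonneg p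
      positivity
  have hlog4 : Real.log 4 ≤ 1.4 := log4_le
  have hlog4nn : (0:ℝ) ≤ Real.log 4 := Real.log_nonneg (by norm_num)
  -- bound the boundary term
  have hgN : (0:ℝ) ≤ g N := by
    rw [hg]; dsimp only; exact inv_nonneg.2 (by linarith)
  have hinvN : (Real.log N)⁻¹ ≤ 1 := by
    rw [inv_le_one_iff₀]; right; linarith
  have ht1 : ∑ x ∈ Pr, Real.log x / x * g N ≤ 2.4 := by
    rw [← Finset.sum_mul]
    have h1 : ∑ x ∈ Pr, Real.log x / x ≤ Real.log N + Real.log 4 :=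
      hT N (ha.trans haN) Pr (fun p hp => ⟨(hmem p hp).1, (hmem p hp).2.2⟩)
    have hNne : Real.log (N:ℝ) ≠ 0 := by linarith
    calc (∑ x ∈ Pr, Real.log x / x) * g N ≤ (Real.log N + Real.log 4) * g N :=
          mul_le_mul_of_nonneg_right h1 hgN
      _ = 1 + Real.log 4 * (Real.log N)⁻¹ := by
          rw [hg]; field_simp
      _ ≤ 1 + 1.4 * 1 := by
          refine add_le_add (le_refl 1) ?_
          exact mul_le_mul hlog4 hinvN (inv_nonneg.2 (by linarith)) (by norm_num)
      _ ≤ 2.4 := by norm_num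
  -- bound the telescoped term
  have hdn : ∀ n ∈ Finset.Ico a N, 0 ≤ g n - g (n+1) := by
    intro n hn
    rw [Finset.mem_Ico] at hn
    have h3 : (3:ℝ) ≤ n := by exact_mod_cast le_trans ha hn.1
    have h1 : 1 < Real.log n := one_lt_log h3
    have h2 : Real.log n ≤ Real.log ((n:ℝ)+1) := Real.log_le_log (by linarith) (by linarith)
    rw [hg]; dsimp only
    push_cast
    have := inv_anti₀ (by linarith : (0:ℝ) < Real.log n) h2
    linarith
  have hinner : ∀ n ∈ Finset.Ico a N,
      (∑ x ∈ Pr, if x ≤ n then Real.log x / x * (g n - g (n+1)) else 0) ≤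
        (Real.log n + Real.log 4) * (g n - g (n+1)) := by
    intro n hn
    have hn' := Finset.mem_Ico.1 hn
    have h3n : 3 ≤ n := le_trans ha hn'.1
    rw [← Finset.sum_filter, ← Finset.sum_mul]
    refine mul_le_mul_of_nonneg_right ?_ (hdn n hn)
    refine hT n h3n _ ?_
    intro p hp
    rw [mem_filter] at hp
    exact ⟨(hmem p hp.1).1, hp.2⟩
  have hkey : ∀ n ∈ Finset.Ico a N, (Real.log n + Real.log 4) * (g n - g (n+1)) ≤
      (Real.log (Real.log ((n+1:ℕ))) - Real.log (Real.log n)) + Real.log 4 * (g n - g (n+1)) := by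
    intro n hn
    have hn' := Finset.mem_Ico.1 hn
    have h3 : (3:ℝ) ≤ n := by exact_mod_cast le_trans ha hn'.1
    set y := Real.log n with hy
    set x := Real.log ((n:ℝ)+1) with hx
    have hy1 : 1 < y := one_lt_log h3
    have hyx : y ≤ x := Real.log_le_log (by linarith) (by linarith)
    have hx1 : 1 < x := lt_of_lt_of_le hy1 hyx
    have hcast : ((n+1:ℕ):ℝ) = (n:ℝ)+1 := by push_cast; ring
    have hgn : g n - g (n+1) = y⁻¹ - x⁻¹ := by
      rw [hg]; dsimp only; rw [hcast]
    rw [hgn, hcast]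
    have hlog : x - y ≤ x * (Real.log x - Real.log y) := by
      have h1 : Real.log (y/x) ≤ y/x - 1 := Real.log_le_sub_one_of_pos (by positivity)
      rw [Real.log_div (by linarith) (by linarith)] at h1
      have h2 := mul_le_mul_of_nonneg_left h1 (by linarith : (0:ℝ) ≤ x)
      have h3 : x * (y/x - 1) = y - x := by field_simp
      rw [h3] at h2
      nlinarith [h2]
    have hexp : y * (y⁻¹ - x⁻¹) = (x - y)/x := by
      field_simp
    have : y * (y⁻¹ - x⁻¹) ≤ Real.log x - Real.log y := by
      rw [hexp, div_le_iff₀ (by linarith : (0:ℝ) < x)]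
      nlinarith [hlog]
    nlinarith [this]
  have htele2 : ∑ n ∈ Finset.Ico a N,
      ((Real.log (Real.log ((n+1:ℕ))) - Real.log (Real.log n)) + Real.log 4 * (g n - g (n+1)))
      ≤ Real.log (Real.log N) - Real.log (Real.log a) + 1.4 := by
    rw [Finset.sum_add_distrib, ← Finset.mul_sum, tele g haN]
    have e1 : ∑ n ∈ Finset.Ico a N,
        (Real.log (Real.log ((n+1:ℕ))) - Real.log (Real.log n)) =
        Real.log (Real.log N) - Real.log (Real.log a) := by
      have t := tele (fun n : ℕ => -(Real.log (Real.log n))) haN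
      simp only [neg_sub_neg] at t
      exact t
    rw [e1]
    have hga : g a ≤ 1 := by
      rw [hg]; dsimp only
      rw [inv_le_one_iff₀]; right; linarith
    have : Real.log 4 * (g a - g N) ≤ 1.4 := by
      have hgasub : g a - g N ≤ 1 := by linarith
      have hganng : 0 ≤ g a - g N := by
        have : Real.log a ≤ Real.log N := Real.log_le_log (by positivity)
          (by exact_mod_cast haN)
        rw [hg]; dsimp only
        have := inv_anti₀ (by linarith : (0:ℝ) < Real.log a) this
        linarith
      calc Real.log 4 * (g a - g N) ≤ 1.4 * 1 :=
            mul_le_mul hlog4 hgasub hganng (by norm_num)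
        _ = 1.4 := by norm_num
    linarith
  have ht2 : ∑ x ∈ Pr, ∑ n ∈ Finset.Ico a N,
      (if x ≤ n then Real.log x / x * (g n - g (n+1)) else 0) ≤
      Real.log (Real.log N) - Real.log (Real.log a) + 1.4 := by
    rw [Finset.sum_comm]
    refine le_trans (Finset.sum_le_sum hinner) ?_
    exact le_trans (Finset.sum_le_sum hkey) htele2
  linarith


/-- `log x` understood as `max (1, log x)`. -/
noncomputable def flog (x : ℝ) : ℝ := max 1 (Real.log x)

/-- Mertens-type bound: `∏_{p | q, p > e^k} (1 - 1/p)⁻¹ ≪ max(1, (log log q)/k)`. -/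
theorem mertens_tail_product_bound :
    ∃ C : ℝ, 0 < C ∧ ∀ (q : ℕ), 3 ≤ q → ∀ (k : ℕ), 1 ≤ k →
      ∏ p ∈ q.primeFactors.filter (fun p : ℕ => (p : ℝ) > Real.exp k),
          (1 - 1 / (p : ℝ))⁻¹ ≤
        C * max 1 (flog (flog q) / k) := by
  classical
  refine ⟨Real.exp 8, Real.exp_pos 8, ?_⟩
  intro q hq3 k hk1
  set P := q.primeFactors.filter (fun p : ℕ => (p : ℝ) > Real.exp k) with hP
  have hq0 : 0 < q := by omega
  have hLq : 1 < Real.log q := one_lt_log (by exact_mod_cast hq3)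
  set L := Real.log q with hL
  have hL0 : 0 < L := by linarith
  set KM := max (k:ℝ) (Real.log L) with hKM
  have hk0 : (0:ℝ) < k := by exact_mod_cast hk1
  have hk1' : (1:ℝ) ≤ k := by exact_mod_cast hk1
  have hKM1 : 1 ≤ KM := le_trans hk1' (le_max_left _ _)
  set M := max 1 (Real.log L / k) with hM
  have hM1 : (1:ℝ) ≤ M := le_max_left _ _
  have hKMeq : KM = k * M := by
    rw [hM, hKM, mul_max_of_nonneg _ _ (le_of_lt hk0), mul_one,
      mul_div_cancel₀ _ (ne_of_gt hk0)]
  set Y := Real.exp KM with hY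
  have hY0 : (0:ℝ) < Y := Real.exp_pos _
  have hY1 : (1:ℝ) ≤ Y := by
    rw [hY]; nlinarith [Real.add_one_le_exp KM]
  have hekY : Real.exp k ≤ Y := Real.exp_le_exp.2 (le_max_left _ _)
  have hLY : L ≤ Y := by
    calc L = Real.exp (Real.log L) := (Real.exp_log hL0).symm
      _ ≤ Y := Real.exp_le_exp.2 (le_max_right _ _)
  set N := Nat.floor Y + 1 with hN
  set z₀ := Nat.floor (Real.exp k) + 1 with hz₀
  have he1 : (2.7182818283:ℝ) < Real.exp 1 := Real.exp_one_gt_d9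
  have hek2 : (2:ℝ) ≤ Real.exp k := by
    have : Real.exp 1 ≤ Real.exp k := Real.exp_le_exp.2 hk1'
    linarith
  have hz₀3 : 3 ≤ z₀ := by
    have : 2 ≤ Nat.floor (Real.exp k) := Nat.le_floor (by exact_mod_cast hek2)
    omega
  have hz₀N : z₀ ≤ N := by
    have : Nat.floor (Real.exp k) ≤ Nat.floor Y := Nat.floor_mono hekY
    omega
  have hNY : Y ≤ (N:ℝ) := by
    have := Nat.lt_floor_add_one Y
    rw [hN]
    push_cast
    linarith
  have hN3 : 3 ≤ N := le_trans hz₀3 hz₀N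
  have hlogNKM : KM ≤ Real.log N := by
    calc KM = Real.log Y := (Real.log_exp KM).symm
      _ ≤ Real.log N := Real.log_le_log hY0 hNY
  have hlogN1 : (1:ℝ) ≤ Real.log N := le_trans hKM1 hlogNKM
  -- membership facts
  have hPmem : ∀ p ∈ P, p.Prime ∧ p ∣ q ∧ Real.exp k < (p:ℝ) := by
    intro p hp
    rw [hP, mem_filter] at hp
    exact ⟨Nat.prime_of_mem_primeFactors hp.1, Nat.dvd_of_mem_primeFactors hp.1, hp.2⟩
  have hp3 : ∀ p ∈ P, 3 ≤ p := by
    intro p hp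
    have h := (hPmem p hp).2.2
    by_contra hc
    push_neg at hc
    interval_cases p <;> [skip; skip; skip] <;> norm_num at h <;> linarith
  have hz₀le : ∀ p ∈ P, z₀ ≤ p := by
    intro p hp
    have h := (hPmem p hp).2.2
    have h2 : (Nat.floor (Real.exp k) : ℝ) < (p:ℝ) :=
      lt_of_le_of_lt (Nat.floor_le (le_of_lt (Real.exp_pos _))) h
    have : Nat.floor (Real.exp k) < p := by exact_mod_cast h2
    omega
  have hpq : ∀ p ∈ P, p ≤ q := fun p hp => Nat.le_of_dvd hq0 (hPmem p hp).2.1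
  -- Step A: product ≤ exp of sum
  have hfac : ∀ p ∈ P, (1 - 1/(p:ℝ))⁻¹ ≤ Real.exp (((p:ℝ) - 1)⁻¹) := by
    intro p hp
    have h3 : (3:ℝ) ≤ p := by exact_mod_cast hp3 p hp
    have hpne : (p:ℝ) ≠ 0 := by linarith
    have hp1ne : (p:ℝ) - 1 ≠ 0 := by linarith
    have heq : (1 - 1/(p:ℝ))⁻¹ = 1 + ((p:ℝ)-1)⁻¹ := by
      field_simp
      ring
    rw [heq]
    have := Real.add_one_le_exp (((p:ℝ)-1)⁻¹)
    linarith
  have hprod : ∏ p ∈ P, (1 - 1/(p:ℝ))⁻¹ ≤ Real.exp (∑ p ∈ P, ((p:ℝ)-1)⁻¹) := by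
    rw [Real.exp_sum]
    refine Finset.prod_le_prod ?_ hfac
    intro p hp
    have h3 : (3:ℝ) ≤ p := by exact_mod_cast hp3 p hp
    have : 1/(p:ℝ) ≤ 1/3 := by
      apply div_le_div_of_nonneg_left (by norm_num) (by norm_num) h3
    have h0 : (0:ℝ) < 1 - 1/(p:ℝ) := by linarith
    positivity
  -- Step B
  have hsumB : ∑ p ∈ P, ((p:ℝ)-1)⁻¹ ≤ ∑ p ∈ P, (p:ℝ)⁻¹ + 1/2 := by
    have hnn : ∀ n ∈ Finset.Icc 3 q, (0:ℝ) ≤ ((n:ℝ)-1)⁻¹ - (n:ℝ)⁻¹ := by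
      intro n hn
      rw [Finset.mem_Icc] at hn
      have h3 : (3:ℝ) ≤ n := by exact_mod_cast hn.1
      have := inv_anti₀ (by linarith : (0:ℝ) < (n:ℝ)-1) (by linarith : (n:ℝ)-1 ≤ n)
      linarith
    have hmain : ∑ p ∈ P, (((p:ℝ)-1)⁻¹ - (p:ℝ)⁻¹) ≤ 1/2 := by
      have hsub : P ⊆ Finset.Icc 3 q :=
        fun p hp => Finset.mem_Icc.2 ⟨hp3 p hp, hpq p hp⟩
      refine le_trans (Finset.sum_le_sum_of_subset_of_nonneg hsub
        (fun n hn _ => hnn n hn)) ?_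
      have hIcc : Finset.Icc 3 q = Finset.Ico 3 (q+1) := by rw [Finset.Ico_add_one_right_eq_Icc]
      rw [hIcc]
      have hcg : ∀ n ∈ Finset.Ico 3 (q+1), ((n:ℝ)-1)⁻¹ - (n:ℝ)⁻¹ =
          (fun n : ℕ => ((n:ℝ)-1)⁻¹) n - (fun n : ℕ => ((n:ℝ)-1)⁻¹) (n+1) := by
        intro n _
        simp only
        push_cast
        norm_num
      rw [Finset.sum_congr rfl hcg, tele _ (by omega : 3 ≤ q+1)]
      push_cast
      norm_num
    rw [Finset.sum_sub_distrib] at hmain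
    linarith
  -- Step C: split the sum
  have hsplitC : ∑ p ∈ P, (p:ℝ)⁻¹ =
      ∑ p ∈ P.filter (fun p => p ≤ N), (p:ℝ)⁻¹ +
      ∑ p ∈ P.filter (fun p => ¬ p ≤ N), (p:ℝ)⁻¹ :=
    (Finset.sum_filter_add_sum_filter_not P _ _).symm
  -- S1 bound
  have hS1 : ∑ p ∈ P.filter (fun p => p ≤ N), (p:ℝ)⁻¹ ≤
      Real.log (Real.log N) - Real.log (Real.log z₀) + 5 := by
    refine le_trans (Finset.sum_le_sum_of_subset_of_nonneg ?_ ?_)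
      (sum_inv_primes_le hz₀3 hz₀N)
    · intro p hp
      rw [mem_filter] at hp
      rw [mem_filter, Finset.mem_Icc]
      exact ⟨⟨hz₀le p hp.1, hp.2⟩, (hPmem p hp.1).1⟩
    · intro p _ _
      positivity
  have hloglogN : Real.log (Real.log N) ≤ Real.log KM + 1 := by
    have hNle2Y : (N:ℝ) ≤ 2*Y := by
      have h1 : (Nat.floor Y : ℝ) ≤ Y := Nat.floor_le (le_of_lt hY0)
      have h2 : (N:ℝ) = (Nat.floor Y : ℝ) + 1 := by rw [hN]; push_cast; ring
      linarith
    have h1 : Real.log (N:ℝ) ≤ KM + Real.log 2 := by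
      calc Real.log (N:ℝ) ≤ Real.log (2*Y) := Real.log_le_log (by positivity) hNle2Y
        _ = Real.log 2 + KM := by
            rw [hY, Real.log_mul (by norm_num) (Real.exp_ne_zero _), Real.log_exp]
        _ = KM + Real.log 2 := by ring
    have hlog2 : Real.log 2 ≤ 0.7 := by
      have := Real.log_two_lt_d9
      linarith
    have h3 : KM + Real.log 2 ≤ KM * Real.exp 1 := by nlinarith
    calc Real.log (Real.log N) ≤ Real.log (KM * Real.exp 1) := by
          apply Real.log_le_log (by linarith)
          linarith
      _ = Real.log KM + 1 := by
          rw [Real.log_mul (by linarith) (Real.exp_ne_zero _), Real.log_exp]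
  have hloglogz₀ : Real.log (k:ℝ) ≤ Real.log (Real.log z₀) := by
    have h1 : Real.exp k ≤ (z₀:ℝ) := by
      have := Nat.lt_floor_add_one (Real.exp k)
      rw [hz₀]
      push_cast
      linarith
    have h2 : (k:ℝ) ≤ Real.log z₀ := by
      calc (k:ℝ) = Real.log (Real.exp k) := (Real.log_exp _).symm
        _ ≤ Real.log z₀ := Real.log_le_log (Real.exp_pos _) h1
    exact Real.log_le_log hk0 h2
  have hlogKM : Real.log KM = Real.log (k:ℝ) + Real.log M := by
    rw [hKMeq, Real.log_mul (ne_of_gt hk0) (by linarith)]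
  -- S2 bound
  have hS2 : ∑ p ∈ P.filter (fun p => ¬ p ≤ N), (p:ℝ)⁻¹ ≤ 1 := by
    have hstep : ∀ p ∈ P.filter (fun p => ¬ p ≤ N),
        (p:ℝ)⁻¹ ≤ Real.log p * (Y * KM)⁻¹ := by
      intro p hp
      rw [mem_filter] at hp
      have hNp : N ≤ p := by omega
      have hYp : Y ≤ (p:ℝ) := le_trans hNY (by exact_mod_cast hNp)
      have hppos : (0:ℝ) < p := lt_of_lt_of_le hY0 hYp
      have hlogp : KM ≤ Real.log p := by
        calc KM = Real.log Y := (Real.log_exp KM).symm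
          _ ≤ Real.log p := Real.log_le_log hY0 hYp
      have h1 : (p:ℝ)⁻¹ ≤ Y⁻¹ := inv_anti₀ hY0 hYp
      have h2 : (1:ℝ) ≤ Real.log p / KM := by
        rw [le_div_iff₀ (by linarith : (0:ℝ) < KM)]
        linarith
      calc (p:ℝ)⁻¹ = (p:ℝ)⁻¹ * 1 := (mul_one _).symm
        _ ≤ Y⁻¹ * (Real.log p / KM) :=
            mul_le_mul h1 h2 (by norm_num) (by positivity)
        _ = Real.log p * (Y*KM)⁻¹ := by
            rw [mul_inv]
            ring
    have hlogsum : ∑ p ∈ P.filter (fun p => ¬ p ≤ N), Real.log p ≤ L := by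
      have hsub : P.filter (fun p => ¬ p ≤ N) ⊆ q.primeFactors := by
        intro p hp
        rw [mem_filter] at hp
        rw [hP, mem_filter] at hp
        exact hp.1.1
      have hdvd : (∏ p ∈ P.filter (fun p => ¬ p ≤ N), p) ∣ q :=
        dvd_trans (Finset.prod_dvd_prod_of_subset _ _ _ hsub) (Nat.prod_primeFactors_dvd q)
      have hppos : ∀ p ∈ P.filter (fun p => ¬ p ≤ N), 0 < p := by
        intro p hp
        rw [mem_filter] at hp
        exact ((hPmem p hp.1).1).pos
      have hle : ((∏ p ∈ P.filter (fun p => ¬ p ≤ N), p : ℕ):ℝ) ≤ (q:ℝ) := by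
        exact_mod_cast Nat.le_of_dvd hq0 hdvd
      calc ∑ p ∈ P.filter (fun p => ¬ p ≤ N), Real.log p
          = Real.log ((∏ p ∈ P.filter (fun p => ¬ p ≤ N), p : ℕ):ℝ) := by
            rw [Nat.cast_prod, Real.log_prod]
            intro p hp
            exact_mod_cast (hppos p hp).ne'
        _ ≤ L := by
            apply Real.log_le_log ?_ hle
            exact_mod_cast Finset.prod_pos hppos
    have hKMinvle : (Y*KM)⁻¹ ≤ (Y*1)⁻¹ := by
      have h' : Y*1 ≤ Y*KM := by
        rw [mul_one]
        exact le_mul_of_one_le_right (le_of_lt hY0) hKM1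
      have h0 : (0:ℝ) < Y*1 := by rw [mul_one]; exact hY0
      exact inv_anti₀ h0 h'
    calc ∑ p ∈ P.filter (fun p => ¬ p ≤ N), (p:ℝ)⁻¹
        ≤ ∑ p ∈ P.filter (fun p => ¬ p ≤ N), Real.log p * (Y * KM)⁻¹ :=
          Finset.sum_le_sum hstep
      _ = (∑ p ∈ P.filter (fun p => ¬ p ≤ N), Real.log p) * (Y * KM)⁻¹ :=
          (Finset.sum_mul _ _ _).symm
      _ ≤ L * (Y * KM)⁻¹ := by
          apply mul_le_mul_of_nonneg_right hlogsum
          positivity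
      _ ≤ Y * (Y*1)⁻¹ := by
          apply mul_le_mul hLY hKMinvle (by positivity) (by linarith)
      _ = 1 := by
          rw [mul_one]
          field_simp
  -- total
  have hlogM0 : 0 ≤ Real.log M := Real.log_nonneg hM1
  have hStot : ∑ p ∈ P, (p:ℝ)⁻¹ ≤ Real.log M + 7 := by
    rw [hsplitC]
    have : Real.log (Real.log N) - Real.log (Real.log z₀) ≤ Real.log M + 1 := by
      have := hloglogN
      rw [hlogKM] at this
      linarith
    linarith
  have hfinal : ∏ p ∈ P, (1 - 1/(p:ℝ))⁻¹ ≤ Real.exp 8 * M := by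
    calc ∏ p ∈ P, (1 - 1/(p:ℝ))⁻¹ ≤ Real.exp (∑ p ∈ P, ((p:ℝ)-1)⁻¹) := hprod
      _ ≤ Real.exp (Real.log M + 7 + 1/2) := by
          apply Real.exp_le_exp.2
          linarith
      _ ≤ Real.exp (Real.log M + 8) := by
          apply Real.exp_le_exp.2
          linarith
      _ = Real.exp 8 * M := by
          rw [Real.exp_add, Real.exp_log (by linarith : (0:ℝ) < M)]
          ring
  -- convert M to the flog form
  have hflogq : flog q = L := by
    rw [flog, max_eq_right (le_of_lt hLq)]
  have hMle : M ≤ max 1 (flog (flog q) / k) := by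
    rw [hflogq, flog, hM]
    refine max_le_max (le_refl 1) ?_
    gcongr
    · exact le_max_right _ _
  calc ∏ p ∈ P, (1 - 1/(p:ℝ))⁻¹ ≤ Real.exp 8 * M := hfinal
    _ ≤ Real.exp 8 * max 1 (flog (flog q) / k) :=
        mul_le_mul_of_nonneg_left hMle (le_of_lt (Real.exp_pos 8))
end

section
/- Let ψ: ℕ → ℝ be non-negative and let m ≠ n be positive integers. With r = ∏_{p: u_p = v_p} p^{u_p} and t = ∏_{p: u_p ≠ v_p} p^{max(u_p, v_p)} (where u_p, v_p are the exponents of p in m, n) and Δ = max(ψ(m)/m, ψ(n)/n), if 2·Δ·r·t ≤ 1 then E_m(ψ) ∩ E_n(ψ) = ∅. -/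
open MeasureTheory Filter Finset

/-- The set `E_n(ψ) ⊆ ℝ/ℤ`, the union over `1 ≤ a ≤ n`, `gcd(a,n)=1`, of the
intervals `((a-ψ(n))/n, (a+ψ(n))/n)` taken mod 1. -/
noncomputable def E (ψ : ℕ → ℝ) (n : ℕ) : Set UnitAddCircle :=
  ⋃ a ∈ (Finset.Icc 1 n).filter (fun a => Nat.Coprime a n),
    (fun y : ℝ => (y : UnitAddCircle)) '' Set.Ioo (((a : ℝ) - ψ n) / n) (((a : ℝ) + ψ n) / n)

/-- `W(ψ)`: points of the circle lying in infinitely many sets `E_n(ψ)`. -/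
noncomputable def W (ψ : ℕ → ℝ) : Set UnitAddCircle := {x | ∃ᶠ n in atTop, x ∈ E ψ n}

theorem aux_dvd (m n : ℕ) (hm : 0 < m) (hn : 0 < n) :
    m ∣ ∏ p ∈ (m * n).primeFactors, p ^ max (m.factorization p) (n.factorization p) := by
  have h1 : ∏ p ∈ (m * n).primeFactors, p ^ m.factorization p = m := by
    rw [← Finset.prod_subset (h := Nat.primeFactors_mono (Dvd.intro n rfl) (by positivity))
      (fun p _ hp => by
        rw [Finsupp.notMem_support_iff.mp (by rwa [Nat.support_factorization]), pow_zero])]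
    rw [← Nat.prod_factorization_eq_prod_primeFactors (f := fun p k => p ^ k),
      Nat.factorization_prod_pow_eq_self hm.ne']
  calc m = ∏ p ∈ (m * n).primeFactors, p ^ m.factorization p := h1.symm
    _ ∣ _ := Finset.prod_dvd_prod_of_dvd _ _ fun p _ => pow_dvd_pow p (le_max_left _ _)

set_option maxHeartbeats 1000000 in
/-- If `2 Δ r t ≤ 1` then `E_m(ψ)` and `E_n(ψ)` are disjoint. -/
theorem disjoint_of_small (ψ : ℕ → ℝ) (hψ : ∀ j, 0 ≤ ψ j)
    (m n : ℕ) (hm : 0 < m) (hn : 0 < n) (hmn : m ≠ n)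
    (r t : ℕ)
    (hr : r = ∏ p ∈ (m * n).primeFactors.filter
        (fun p => m.factorization p = n.factorization p), p ^ m.factorization p)
    (ht : t = ∏ p ∈ (m * n).primeFactors.filter
        (fun p => m.factorization p ≠ n.factorization p),
        p ^ max (m.factorization p) (n.factorization p))
    (hsmall : 2 * max (ψ m / m) (ψ n / n) * r * t ≤ 1) :
    E ψ m ∩ E ψ n = ∅ := by
  -- r * t is the product over all prime factors of p ^ max
  have hrt : r * t = ∏ p ∈ (m * n).primeFactors,
      p ^ max (m.factorization p) (n.factorization p) := by
    rw [hr, ht, ← Finset.prod_filter_mul_prod_filter_not (m * n).primeFactors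
      (fun p => m.factorization p = n.factorization p)]
    congr 1
    exact Finset.prod_congr rfl fun p hp => by
      rw [(Finset.mem_filter.mp hp).2, max_self]
  have hmL : m ∣ r * t := hrt ▸ aux_dvd m n hm hn
  have hnL : n ∣ r * t := by
    rw [hrt, mul_comm m n]
    simpa [max_comm] using aux_dvd n m hn hm
  have hL : 0 < r * t := by
    rw [hrt]
    exact Finset.prod_pos fun p hp => pow_pos (Nat.prime_of_mem_primeFactors hp).pos _
  -- now the main argument
  rw [Set.eq_empty_iff_forall_notMem]
  rintro x ⟨hxm, hxn⟩
  simp only [E, Set.mem_iUnion, Finset.mem_filter, Finset.mem_Icc, Set.mem_image,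
    Set.mem_Ioo, exists_prop] at hxm hxn
  obtain ⟨a, ⟨⟨ha1, ham⟩, hacop⟩, y, ⟨hy1, hy2⟩, hyx⟩ := hxm
  obtain ⟨b, ⟨⟨hb1, hbn⟩, hbcop⟩, z, ⟨hz1, hz2⟩, hzx⟩ := hxn
  -- y and z differ by an integer k
  obtain ⟨k, hk⟩ : ∃ k : ℤ, (k : ℝ) = y - z := by
    have : ((y - z : ℝ) : UnitAddCircle) = 0 := by
      rw [AddCircle.coe_sub, hyx, hzx, sub_self]
    simpa using (AddCircle.coe_eq_zero_iff (1 : ℝ)).mp this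
  set Δ := max (ψ m / m) (ψ n / n) with hΔ
  have hm' : (0:ℝ) < m := by exact_mod_cast hm
  have hn' : (0:ℝ) < n := by exact_mod_cast hn
  have hya : |y - (a:ℝ) / m| < Δ := by
    have h1 : (a:ℝ)/m - ψ m / m < y := by rw [← sub_div]; exact hy1
    have h2 : y < (a:ℝ)/m + ψ m / m := by rw [← add_div]; exact hy2
    have h3 : ψ m / m ≤ Δ := le_max_left _ _
    rw [abs_lt]; constructor <;> linarith
  have hzb : |z - (b:ℝ) / n| < Δ := by
    have h1 : (b:ℝ)/n - ψ n / n < z := by rw [← sub_div]; exact hz1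
    have h2 : z < (b:ℝ)/n + ψ n / n := by rw [← add_div]; exact hz2
    have h3 : ψ n / n ≤ Δ := le_max_right _ _
    rw [abs_lt]; constructor <;> linarith
  have hkey : |((a:ℝ)/m - (b:ℝ)/n) - k| < 2 * Δ := by
    rw [abs_lt] at hya hzb ⊢
    constructor <;> [nlinarith [hya.1, hzb.2, hk]; nlinarith [hya.2, hzb.1, hk]]
  -- the rational a/m - b/n has denominator dividing r*t
  have hL' : (0:ℝ) < ((r*t : ℕ) : ℝ) := by exact_mod_cast hL
  have hLm : (((r*t)/m : ℕ) : ℝ) = ((r*t : ℕ) : ℝ) / m := Nat.cast_div hmL hm'.ne'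
  have hLn : (((r*t)/n : ℕ) : ℝ) = ((r*t : ℕ) : ℝ) / n := Nat.cast_div hnL hn'.ne'
  set q : ℤ := (a * ((r*t)/m) : ℕ) - (b * ((r*t)/n) : ℕ) with hqdef
  have hqr : (q : ℝ) = ((r*t : ℕ) : ℝ) * ((a:ℝ)/m - (b:ℝ)/n) := by
    rw [hqdef, Int.cast_sub, Int.cast_natCast, Int.cast_natCast, Nat.cast_mul, Nat.cast_mul,
      hLm, hLn]
    field_simp
  have habs : |(q:ℝ) - k * ((r*t : ℕ) : ℝ)| < 1 := by
    have he : (q:ℝ) - k * ((r*t : ℕ) : ℝ)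
        = ((r*t : ℕ) : ℝ) * (((a:ℝ)/m - (b:ℝ)/n) - k) := by rw [hqr]; ring
    rw [he, abs_mul, abs_of_pos hL']
    have hs : ((r*t : ℕ) : ℝ) * (2 * Δ) ≤ 1 := by push_cast at hsmall ⊢; nlinarith
    calc ((r*t : ℕ) : ℝ) * |((a:ℝ)/m - (b:ℝ)/n) - k|
        < ((r*t : ℕ) : ℝ) * (2 * Δ) := by exact mul_lt_mul_of_pos_left hkey hL'
      _ ≤ 1 := hs
  have hcast : ((q - k * (r*t:ℕ) : ℤ) : ℝ) = (q:ℝ) - (k:ℝ) * ((r*t:ℕ):ℝ) := by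
    push_cast; ring
  have hq0 : q = k * ((r*t:ℕ):ℤ) := by
    have h1 : |((q - k*((r*t:ℕ):ℤ) : ℤ) : ℝ)| < 1 := by rw [hcast]; exact habs
    have h2 : |q - k*((r*t:ℕ):ℤ)| < 1 := by exact_mod_cast h1
    have h3 := Int.abs_lt_one_iff.mp h2
    omega
  have hq1 : (q:ℝ) = (k:ℝ) * ((r*t:ℕ):ℝ) := by rw [hq0]; push_cast; ring
  have hfrac : (a:ℝ)/m - (b:ℝ)/n = (k:ℝ) := by
    refine mul_left_cancel₀ hL'.ne' ?_
    rw [← hqr, hq1]; ring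
  -- k must be 0
  have ha0 : (0:ℝ) < (a:ℝ)/m := div_pos (by exact_mod_cast ha1) hm'
  have ha2 : (a:ℝ)/m ≤ 1 := (div_le_one hm').mpr (by exact_mod_cast ham)
  have hb0 : (0:ℝ) < (b:ℝ)/n := div_pos (by exact_mod_cast hb1) hn'
  have hb2 : (b:ℝ)/n ≤ 1 := (div_le_one hn').mpr (by exact_mod_cast hbn)
  have hk0 : k = 0 := by
    have h1 : (-1:ℝ) < (k:ℝ) := by linarith
    have h2 : (k:ℝ) < 1 := by linarith
    have h1' : (-1:ℤ) < k := by exact_mod_cast h1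
    have h2' : k < 1 := by exact_mod_cast h2
    omega
  rw [hk0] at hfrac
  have heq : (a:ℝ) * n = (b:ℝ) * m := by
    field_simp at hfrac
    simp only [Int.cast_zero, mul_zero] at hfrac
    linarith [hfrac]
  have heqn : a * n = b * m := by exact_mod_cast heq
  have hmd : m ∣ n := by
    refine (Nat.Coprime.dvd_of_dvd_mul_right hacop.symm ?_ : m ∣ n)
    exact ⟨b, by rw [mul_comm n a, heqn]; ring⟩
  have hnd : n ∣ m := by
    refine (Nat.Coprime.dvd_of_dvd_mul_right hbcop.symm ?_ : n ∣ m)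
    exact ⟨a, by rw [mul_comm m b, ← heqn]; ring⟩
  exact hmn (Nat.dvd_antisymm hmd hnd)
end

section
/- (Gallagher's zero-one law) For every non-negative function ψ: ℕ → ℝ, the measure λ(W(ψ)) is eitherated 0 or 1. -/
open MeasureTheory Filter Finset

section GallagherAux

open Metric ArithmeticFunction

lemma coe_int_addCircle (k : ℤ) : ((k : ℝ) : UnitAddCircle) = 0 := by
  rw [AddCircle.coe_eq_zero_iff]
  exact ⟨k, by simp⟩

lemma image_Ioo_eq_ball (c δ : ℝ) :
    (fun y : ℝ => (y : UnitAddCircle)) '' Set.Ioo (c - δ) (c + δ) = ball (c : UnitAddCircle) δ := by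
  ext u
  constructor
  · rintro ⟨y, hy, rfl⟩
    rw [mem_ball, dist_eq_norm, ← AddCircle.coe_sub]
    calc ‖((y - c : ℝ) : UnitAddCircle)‖ ≤ ‖y - c‖ := QuotientAddGroup.norm_mk_le_norm
      _ < δ := by rw [Real.norm_eq_abs, abs_lt]; constructor <;> [linarith [hy.1]; linarith [hy.2]]
  · intro hu
    obtain ⟨z, rfl⟩ := QuotientAddGroup.mk'_surjective _ u
    rw [mem_ball, dist_eq_norm] at hu
    have h1 : ((QuotientAddGroup.mk' (AddSubgroup.zmultiples (1:ℝ))) z : UnitAddCircle) = (z : UnitAddCircle) := rfl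
    rw [h1, ← AddCircle.coe_sub, AddCircle.norm_eq] at hu
    simp only [inv_one, one_mul, mul_one] at hu
    refine ⟨z - round (z - c), ?_, ?_⟩
    · rw [Set.mem_Ioo]
      rw [abs_lt] at hu
      constructor <;> [linarith [hu.1]; linarith [hu.2]]
    · have : ((z - round (z-c) : ℝ) : UnitAddCircle) = (z : UnitAddCircle) - ((((round (z-c) : ℤ)): ℝ) : UnitAddCircle) := by
        push_cast [AddCircle.coe_sub]; ring_nf
      show ((z - round (z-c) : ℝ) : UnitAddCircle) = _
      rw [h1, this, coe_int_addCircle, sub_zero]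


lemma image_Ioo_div_eq_ball (A B C : ℝ) :
    (fun y : ℝ => (y : UnitAddCircle)) '' Set.Ioo ((A - B) / C) ((A + B) / C)
      = Metric.ball ((A / C : ℝ) : UnitAddCircle) (B / C) := by
  rw [sub_div, add_div]
  exact image_Ioo_eq_ball (A / C) (B / C)


lemma E_eq (ψ : ℕ → ℝ) {n : ℕ} (hn : 0 < n) :
    E ψ n = approxAddOrderOf UnitAddCircle n (ψ n / n) := by
  rw [approxAddOrderOf, thickening_eq_biUnion_ball]
  unfold E
  ext u
  simp only [Set.mem_iUnion, mem_coe, Finset.mem_filter, Finset.mem_Icc, Set.mem_setOf_eq,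
    exists_prop, image_Ioo_div_eq_ball]
  constructor
  · rintro ⟨a, ⟨⟨ha1, ha2⟩, hcop⟩, hu⟩
    refine ⟨(((a:ℝ)/n : ℝ) : UnitAddCircle), ?_, hu⟩
    rcases eq_or_lt_of_le ha2 with rfl | hlt
    · have h1 : a = 1 := by simpa [Nat.Coprime, Nat.gcd_self] using hcop
      have ha : ((a:ℝ)/(a:ℝ) : ℝ) = 1 := by rw [h1]; norm_num
      rw [ha, show ((1 : ℝ) : UnitAddCircle) = 0 from AddCircle.coe_period (1:ℝ)]
      rw [h1]
      exact addOrderOf_zero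
    · rw [AddCircle.addOrderOf_eq_pos_iff hn]
      exact ⟨a, hlt, hcop, by rw [mul_one]⟩
  · rintro ⟨y, hy, hu⟩
    rw [AddCircle.addOrderOf_eq_pos_iff hn] at hy
    obtain ⟨m, hm, hg, rfl⟩ := hy
    rcases Nat.eq_zero_or_pos m with rfl | hm0
    · have h1 : n = 1 := by simpa [Nat.gcd] using hg
      subst h1
      refine ⟨1, ⟨⟨le_refl 1, le_refl 1⟩, Nat.coprime_one_left 1⟩, ?_⟩
      have e1 : (((1:ℕ):ℝ)/((1:ℕ):ℝ) : ℝ) = 1 := by norm_num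
      have e0 : ((0:ℕ):ℝ) / ((1:ℕ):ℝ) * 1 = (0:ℝ) := by norm_num
      rw [e0] at hu
      rw [e1, show ((1 : ℝ) : UnitAddCircle) = 0 from AddCircle.coe_period (1:ℝ)]
      simpa using hu
    · refine ⟨m, ⟨⟨hm0, hm.le⟩, hg⟩, ?_⟩
      rw [show ((m:ℝ)/(n:ℝ) * 1) = (m:ℝ)/n by ring] at hu
      exact hu


attribute [local instance] ZeroLEOneClass.factZeroLtOne

lemma W_eq (ψ : ℕ → ℝ) : W ψ = addWellApproximable UnitAddCircle (fun n => ψ n / n) := by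
  have key : addWellApproximable UnitAddCircle (fun n => ψ n / n) =
      {x | {n : ℕ | 0 < n ∧ x ∈ approxAddOrderOf UnitAddCircle n (ψ n / n)}.Infinite} := by
    rw [addWellApproximable, ← Nat.cofinite_eq_atTop, cofinite.blimsup_set_eq]
  rw [key]
  ext x
  simp only [W, Set.mem_setOf_eq]
  rw [Nat.frequently_atTop_iff_infinite]
  have hset : {n : ℕ | x ∈ E ψ n}
      = {n : ℕ | 0 < n ∧ x ∈ approxAddOrderOf UnitAddCircle n (ψ n / n)} := by
    ext n
    rcases Nat.eq_zero_or_pos n with rfl | hn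
    · simp [E]
    · simp only [Set.mem_setOf_eq, E_eq ψ hn, hn, true_and]
  rw [hset]

lemma caseA (ψ : ℕ → ℝ) (hδ : Tendsto (fun n => ψ n / n) atTop (nhds 0)) :
    volume (W ψ) = 0 ∨ volume (W ψ) = 1 := by
  rcases AddCircle.addWellApproximable_ae_empty_or_univ (T := 1) (fun n => ψ n / n) hδ with h | h
  · left
    rw [W_eq, ae_iff] at *
    simpa using h
  · right
    rw [W_eq]
    rw [ae_iff] at h
    set S := addWellApproximable UnitAddCircle (fun n => ψ n / n)
    have hc : volume Sᶜ = 0 := by simpa [Set.compl_def] using h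
    have h1 : volume S ≤ 1 := by
      rw [← UnitAddCircle.measure_univ]; exact measure_mono (Set.subset_univ _)
    have h2 : (1:ENNReal) ≤ volume S := by
      calc (1:ENNReal) = volume (Set.univ : Set UnitAddCircle) := UnitAddCircle.measure_univ.symm
        _ = volume (S ∪ Sᶜ) := by rw [Set.union_compl_self]
        _ ≤ volume S + volume Sᶜ := measure_union_le _ _
        _ = volume S := by rw [hc, add_zero]
    exact le_antisymm h1 h2

lemma sum_moebius_divisors (k : ℕ) :
    ∑ d ∈ k.divisors, moebius d = if k = 1 then 1 else 0 := by
  have h := congrArg (fun f : ArithmeticFunction ℤ => f k) moebius_mul_coe_zeta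
  simp only [coe_mul_zeta_apply] at h
  rw [h, one_apply]

lemma card_multiples_Ioc (d x H : ℕ) : #((Finset.Ioc x (x+H)).filter (d ∣ ·)) = (x+H)/d - x/d := by
  have hsplit : Finset.Ioc 0 (x+H) = Finset.Ioc 0 x ∪ Finset.Ioc x (x+H) :=
    (Finset.Ioc_union_Ioc_eq_Ioc (Nat.zero_le x) (Nat.le_add_right x H)).symm
  have hdisj : Disjoint ((Finset.Ioc 0 x).filter (d ∣ ·)) ((Finset.Ioc x (x+H)).filter (d ∣ ·)) := by
    apply Finset.disjoint_filter_filter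
    rw [Finset.disjoint_left]
    intro a ha hb
    exact absurd (Finset.mem_Ioc.mp hb).1 (not_lt.mpr (Finset.mem_Ioc.mp ha).2)
  have h1 := Nat.Ioc_filter_dvd_card_eq_div (x+H) d
  have h2 := Nat.Ioc_filter_dvd_card_eq_div x d
  rw [hsplit, Finset.filter_union, Finset.card_union_of_disjoint hdisj, h2] at h1
  omega

lemma squarefree_prod_primes {s : Finset ℕ} (hs : ∀ p ∈ s, p.Prime) :
    Squarefree (∏ p ∈ s, p) := by
  classical
  induction s using Finset.induction_on with
  | empty => simp only [Finset.prod_empty]; exact squarefree_one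
  | @insert p s hp ih =>
    rw [Finset.prod_insert hp]
    have hpp : p.Prime := hs p (Finset.mem_insert_self p s)
    have hcop : Nat.Coprime p (∏ q ∈ s, q) := by
      rw [Nat.coprime_prod_right_iff]
      intro q hq
      exact (Nat.coprime_primes hpp (hs q (Finset.mem_insert_of_mem hq))).mpr
        (fun h => hp (h ▸ hq))
    rw [Nat.squarefree_mul hcop]
    exact ⟨hpp.squarefree, ih fun q hq => hs q (Finset.mem_insert_of_mem hq)⟩

lemma divisors_gcd_eq (m r : ℕ) (hr : 0 < r) :
    (Nat.gcd m r).divisors = r.divisors.filter (· ∣ m) := by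
  ext d
  simp only [Nat.mem_divisors, Finset.mem_filter]
  constructor
  · rintro ⟨hd, -⟩
    exact ⟨⟨hd.trans (Nat.gcd_dvd_right m r), hr.ne'⟩, hd.trans (Nat.gcd_dvd_left m r)⟩
  · rintro ⟨⟨hdr, -⟩, hdm⟩
    refine ⟨Nat.dvd_gcd hdm hdr, fun h => hr.ne' (Nat.eq_zero_of_gcd_eq_zero_right h)⟩

lemma count_coprime_Ioc (r x H : ℕ) (hr : 0 < r) :
    (#((Finset.Ioc x (x+H)).filter (fun m => Nat.Coprime m r)) : ℤ)
      = ∑ d ∈ r.divisors, moebius d * (((x+H)/d - x/d : ℕ) : ℤ) := by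
  have h1 : (#((Finset.Ioc x (x+H)).filter (fun m => Nat.Coprime m r)) : ℤ)
      = ∑ m ∈ Finset.Ioc x (x+H), if Nat.Coprime m r then (1:ℤ) else 0 := by
    rw [Finset.card_filter]
    push_cast
    rfl
  rw [h1]
  have h2 : ∀ m ∈ Finset.Ioc x (x+H), (if Nat.Coprime m r then (1:ℤ) else 0)
      = ∑ d ∈ r.divisors.filter (· ∣ m), moebius d := by
    intro m _
    rw [← divisors_gcd_eq m r hr, sum_moebius_divisors]
  rw [Finset.sum_congr rfl h2]
  simp_rw [Finset.sum_filter]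
  rw [Finset.sum_comm]
  refine Finset.sum_congr rfl fun d hd => ?_
  rw [← Finset.sum_filter, Finset.sum_const, ← card_multiples_Ioc d x H]
  push_cast
  ring

noncomputable def finv : ArithmeticFunction ℝ := ⟨fun d => (d:ℝ)⁻¹, by simp⟩

lemma finv_apply (d : ℕ) : finv d = (d:ℝ)⁻¹ := rfl

lemma finv_mult : finv.IsMultiplicative := by
  constructor
  · simp [finv_apply]
  · intro m n _
    simp only [finv_apply]
    push_cast
    rw [mul_inv]

lemma card_divisors_sqfree {r : ℕ} (hr : Squarefree r) :
    #(r.divisors) = 2 ^ r.primeFactors.card := by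
  rw [Nat.card_divisors hr.ne_zero,
    Finset.prod_congr rfl (fun p hp => (?_ : r.factorization p + 1 = 2)), Finset.prod_const]
  have h1 : r.factorization p ≤ 1 := hr.natFactorization_le_one p
  have h2 : r.factorization p ≠ 0 := by
    rw [← Nat.support_factorization] at hp
    exact Finsupp.mem_support_iff.mp hp
  omega

lemma exists_coprime_Ioc (n x H : ℕ) (hn : 0 < n)
    (hH : 2 * (4:ℝ) ^ n.primeFactors.card < (H:ℝ)) :
    ∃ a ∈ Finset.Ioc x (x+H), Nat.Coprime a n := by
  classical
  set om := n.primeFactors.card with hω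
  set r := ∏ p ∈ n.primeFactors, p with hrdef
  have hprimes : ∀ p ∈ n.primeFactors, p.Prime := fun p hp => Nat.prime_of_mem_primeFactors hp
  have hsqf : Squarefree r := squarefree_prod_primes hprimes
  have hrpos : 0 < r := Nat.pos_of_ne_zero hsqf.ne_zero
  have hpf : r.primeFactors = n.primeFactors := Nat.primeFactors_prod hprimes
  have hiff : ∀ m, 0 < m → Nat.Coprime m r → Nat.Coprime m n := by
    intro m hm hc
    rw [← Nat.disjoint_primeFactors hm.ne' hn.ne']
    rw [← Nat.disjoint_primeFactors hm.ne' hrpos.ne', hpf] at hc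
    exact hc
  set Wf := (Finset.Ioc x (x+H)).filter (fun m => Nat.Coprime m r) with hWf
  suffices hW : Wf.Nonempty by
    obtain ⟨a, ha⟩ := hW
    rw [hWf, Finset.mem_filter] at ha
    have ha1 : 0 < a := (Finset.mem_Ioc.mp ha.1).1.trans_le' (Nat.zero_le x) |>.trans_le (le_refl _)
    exact ⟨a, ha.1, hiff a (by omega) ha.2⟩
  rw [← Finset.card_pos]
  have keyZ := count_coprime_Ioc r x H hrpos
  have keyR : (#Wf : ℝ) = ∑ d ∈ r.divisors, (moebius d : ℝ) * (((x+H)/d - x/d : ℕ) : ℝ) := by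
    exact_mod_cast keyZ
  have hlb : ∀ d ∈ r.divisors,
      (moebius d : ℝ) * ((H:ℝ)/d) - 1 ≤ (moebius d : ℝ) * (((x+H)/d - x/d : ℕ) : ℝ) := by
    intro d hd
    have hdpos : 0 < d := Nat.pos_of_mem_divisors hd
    have hAdd : (x+H)/d = x/d + H/d ∨ (x+H)/d = x/d + H/d + 1 := by
      have h := Nat.add_div (a := x) (b := H) hdpos
      rcases le_or_gt d (x % d + H % d) with hle | hlt
      · rw [if_pos hle] at h; right; exact h
      · rw [if_neg (not_le.mpr hlt)] at h; left; simpa using h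
    have hsub : (x+H)/d - x/d = H/d ∨ (x+H)/d - x/d = H/d + 1 := by
      rcases hAdd with h|h
      · left; rw [h, Nat.add_sub_cancel_left]
      · right; rw [h, Nat.add_assoc, Nat.add_sub_cancel_left]
    have hc1 : H/d ≤ (x+H)/d - x/d := by rcases hsub with h|h <;> rw [h] <;> simp
    have hc2 : (x+H)/d - x/d ≤ H/d + 1 := by rcases hsub with h|h <;> rw [h] <;> simp
    have hcast1 : ((H/d : ℕ):ℝ) ≤ (H:ℝ)/d := Nat.cast_div_le
    have hcast2 : (H:ℝ)/d - 1 < ((H/d : ℕ):ℝ) := by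
      rw [div_sub_one (by positivity), div_lt_iff₀ (by positivity : (0:ℝ) < (d:ℝ))]
      have hdm : ((H/d : ℕ):ℝ) * d + ((H % d : ℕ):ℝ) = (H:ℝ) := by
        exact_mod_cast Nat.div_add_mod' H d
      have hml : ((H % d : ℕ):ℝ) < (d:ℝ) := by exact_mod_cast Nat.mod_lt H hdpos
      linarith
    have hmu : |(moebius d : ℝ)| ≤ 1 := by
      have := abs_moebius_le_one (n := d)
      exact_mod_cast this
    have hcl : ((H:ℝ)/d - 1) ≤ (((x+H)/d - x/d : ℕ) : ℝ) := by
      calc (H:ℝ)/d - 1 ≤ ((H/d : ℕ):ℝ) := hcast2.le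
        _ ≤ _ := by exact_mod_cast hc1
    have hcu : (((x+H)/d - x/d : ℕ) : ℝ) ≤ (H:ℝ)/d + 1 := by
      calc (((x+H)/d - x/d : ℕ) : ℝ) ≤ ((H/d : ℕ):ℝ) + 1 := by exact_mod_cast hc2
        _ ≤ (H:ℝ)/d + 1 := by linarith
    nlinarith [abs_le.mp hmu, abs_nonneg ((moebius d : ℝ))]
  have hsum1 : ∑ d ∈ r.divisors, ((moebius d : ℝ) * ((H:ℝ)/d) - 1)
      ≤ (#Wf : ℝ) := by
    rw [keyR]
    exact Finset.sum_le_sum hlb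
  rw [Finset.sum_sub_distrib, Finset.sum_const, card_divisors_sqfree hsqf, hpf] at hsum1
  simp only [nsmul_eq_mul, mul_one, Nat.cast_pow, Nat.cast_ofNat] at hsum1
  have hprod : ∑ d ∈ r.divisors, (moebius d:ℝ) * ((H:ℝ)/d)
      = (H:ℝ) * ∏ p ∈ r.primeFactors, (1 - (p:ℝ)⁻¹) := by
    have h := ArithmeticFunction.IsMultiplicative.prodPrimeFactors_one_sub_of_squarefree
      finv finv_mult hsqf
    simp only [finv_apply] at h
    rw [h, Finset.mul_sum]
    refine Finset.sum_congr rfl fun d _ => ?_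
    rw [div_eq_mul_inv]
    ring
  have hprodlb : ((2:ℝ)⁻¹) ^ om ≤ ∏ p ∈ r.primeFactors, (1 - (p:ℝ)⁻¹) := by
    rw [← hpf] at hω
    rw [hω, ← Finset.prod_const]
    refine Finset.prod_le_prod (fun p _ => by positivity) (fun p hp => ?_)
    have hp2 : 2 ≤ p := (hprimes p (hpf ▸ hp)).two_le
    have : (p:ℝ) ≥ 2 := by exact_mod_cast hp2
    have hpinv : (p:ℝ)⁻¹ ≤ 2⁻¹ := by
      apply inv_anti₀ <;> linarith
    linarith
  have hHpos : (0:ℝ) ≤ (H:ℝ) := Nat.cast_nonneg H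
  have hfinal : (0:ℝ) < (#Wf : ℝ) := by
    have h2pos : (0:ℝ) < (2:ℝ)^om := by positivity
    have hm : (H:ℝ) * ((2:ℝ)⁻¹)^om ≤ (H:ℝ) * ∏ p ∈ r.primeFactors, (1 - (p:ℝ)⁻¹) :=
      mul_le_mul_of_nonneg_left hprodlb hHpos
    have hkey : 2 * (4:ℝ)^om * ((2:ℝ)⁻¹)^om < (H:ℝ) * ((2:ℝ)⁻¹)^om :=
      mul_lt_mul_of_pos_right hH (by positivity)
    have h4 : (4:ℝ)^om * ((2:ℝ)⁻¹)^om = (2:ℝ)^om := by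
      rw [← mul_pow]
      norm_num
    have hkey2 : 2*(2:ℝ)^om < (H:ℝ) * ((2:ℝ)⁻¹)^om := by
      calc 2*(2:ℝ)^om = 2 * ((4:ℝ)^om * ((2:ℝ)⁻¹)^om) := by rw [h4]
        _ = 2 * (4:ℝ)^om * ((2:ℝ)⁻¹)^om := by ring
        _ < _ := hkey
    rw [hprod] at hsum1
    linarith [hsum1, hm, hkey2, h2pos]
  exact_mod_cast hfinal

lemma om_bound (n : ℕ) (hn : 0 < n) : 16 ^ n.primeFactors.card ≤ 16 ^ 17 * n := by
  classical
  set P := n.primeFactors with hP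
  have hprimes : ∀ p ∈ P, p.Prime := fun p hp => Nat.prime_of_mem_primeFactors hp
  have hr_le : ∏ p ∈ P, p ≤ n := Nat.le_of_dvd hn (Nat.prod_primeFactors_dvd n)
  set P1 := P.filter (fun p => 17 ≤ p) with hP1
  set P2 := P.filter (fun p => ¬ 17 ≤ p) with hP2
  have hsplit : P1.card + P2.card = P.card := Finset.card_filter_add_card_filter_not _
  have hP2card : P2.card ≤ 17 := by
    have hsub : P2 ⊆ Finset.range 17 := by
      intro p hp
      rw [hP2, Finset.mem_filter] at hp
      exact Finset.mem_range.mpr (by omega)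
    simpa using Finset.card_le_card hsub
  have h16 : 16 ^ P1.card ≤ ∏ p ∈ P1, p := by
    rw [← Finset.prod_const]
    refine Finset.prod_le_prod' fun p hp => ?_
    rw [hP1, Finset.mem_filter] at hp
    omega
  have hsubprod : ∏ p ∈ P1, p ≤ ∏ p ∈ P, p := by
    refine Finset.prod_le_prod_of_subset_of_one_le' (Finset.filter_subset _ _) ?_
    intro p hp _
    exact (hprimes p hp).one_lt.le
  calc 16 ^ P.card = 16 ^ P2.card * 16 ^ P1.card := by rw [← pow_add]; rw [← hsplit]; ring
    _ ≤ 16 ^ 17 * n := by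
      refine Nat.mul_le_mul (Nat.pow_le_pow_right (by norm_num) hP2card) ?_
      exact le_trans h16 (le_trans hsubprod hr_le)

lemma E_univ (ψ : ℕ → ℝ) {n : ℕ} {c : ℝ} (hc : 0 < c) (hn : 0 < n)
    (hψn : c * n ≤ ψ n)
    (hbig : 2 * (4:ℝ) ^ n.primeFactors.card < c/2 * n - 1) :
    E ψ n = Set.univ := by
  have hn' : (0:ℝ) < n := by exact_mod_cast hn
  refine Set.eq_univ_of_forall fun u => ?_
  obtain ⟨z, rfl⟩ := QuotientAddGroup.mk'_surjective (AddSubgroup.zmultiples (1:ℝ)) u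
  have hmk : ∀ w : ℝ, (QuotientAddGroup.mk' (AddSubgroup.zmultiples (1:ℝ)) w : UnitAddCircle)
      = (w : UnitAddCircle) := fun w => rfl
  set y := Int.fract z with hy
  have hy0 : 0 ≤ y := Int.fract_nonneg z
  have hy1 : y < 1 := Int.fract_lt_one z
  have hyu : ((y : ℝ) : UnitAddCircle) = (z : UnitAddCircle) := by
    have : y = z - (⌊z⌋ : ℝ) := by rw [hy, Int.fract]
    rw [this, AddCircle.coe_sub, coe_int_addCircle, sub_zero]
  set t := (n:ℝ) * y with ht
  have ht0 : 0 ≤ t := by positivity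
  set x₀ := ⌊t⌋₊ with hx₀
  set H := ⌊c/2 * (n:ℝ)⌋₊ with hH
  have hHle : (H:ℝ) ≤ c/2 * n := Nat.floor_le (by positivity)
  have hHgt : c/2 * n - 1 < (H:ℝ) := Nat.sub_one_lt_floor _
  obtain ⟨a, haIoc, hacop⟩ := exists_coprime_Ioc n x₀ H hn (lt_trans hbig hHgt)
  rw [Finset.mem_Ioc] at haIoc
  have hx₀t : (x₀:ℝ) ≤ t := Nat.floor_le ht0
  have htx₀ : t < x₀ + 1 := Nat.lt_floor_add_one t
  have hta : t < (a:ℝ) := by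
    have : (x₀:ℝ) + 1 ≤ (a:ℝ) := by exact_mod_cast haIoc.1
    linarith
  have hat : (a:ℝ) - t ≤ (H:ℝ) := by
    have : (a:ℝ) ≤ (x₀:ℝ) + (H:ℝ) := by exact_mod_cast haIoc.2
    linarith
  have hcn : 0 < c * n := mul_pos hc hn'
  have hψpos : 0 < ψ n := lt_of_lt_of_le hcn hψn
  have hhalf : c/2 * n < ψ n := by linarith
  have hyIoo : y ∈ Set.Ioo (((a:ℝ) - ψ n)/n) (((a:ℝ) + ψ n)/n) := by
    have hyt : y = t / n := by rw [ht]; field_simp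
    constructor
    · rw [hyt, div_lt_div_iff_of_pos_right hn']
      linarith
    · rw [hyt, div_lt_div_iff_of_pos_right hn']
      linarith
  -- reduce a modulo n
  set k := (a-1)/n with hk
  set a' := (a-1) % n + 1 with ha'
  have ha1 : 1 ≤ a := Nat.one_le_iff_ne_zero.mpr (by rintro rfl; exact Nat.not_lt_zero _ haIoc.1)
  have hdm := Nat.div_add_mod (a-1) n
  have ha_eq : k * n + a' = a := by
    calc k * n + ((a-1) % n + 1) = (n * ((a-1)/n) + (a-1) % n) + 1 := by ring
      _ = (a-1) + 1 := by rw [hdm]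
      _ = a := Nat.succ_pred_eq_of_pos ha1
  have ha_eq' : a' + k * n = a := by rw [add_comm]; exact ha_eq
  have ha'1 : 1 ≤ a' := Nat.le_add_left 1 _
  have ha'n : a' ≤ n := Nat.succ_le_of_lt (Nat.mod_lt _ hn)
  have hacop' : Nat.Coprime a' n := by
    rw [← ha_eq'] at hacop
    exact (Nat.coprime_add_mul_right_left a' n k).mp hacop
  have haR : (a:ℝ) = k * n + a' := by exact_mod_cast (congrArg (fun s : ℕ => (s:ℝ)) ha_eq).symm
  have e1 : ((a':ℝ) - ψ n)/n = ((a:ℝ) - ψ n)/n - k := by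
    rw [haR]; field_simp; ring
  have e2 : ((a':ℝ) + ψ n)/n = ((a:ℝ) + ψ n)/n - k := by
    rw [haR]; field_simp; ring
  have hIoo : y - k ∈ Set.Ioo (((a':ℝ) - ψ n)/n) (((a':ℝ) + ψ n)/n) := by
    rw [e1, e2]
    exact ⟨by linarith [hyIoo.1], by linarith [hyIoo.2]⟩
  have hcoe : ((y - (k:ℕ) : ℝ) : UnitAddCircle) = (z : UnitAddCircle) := by
    rw [AddCircle.coe_sub]
    have h0 : (((k:ℕ):ℝ) : UnitAddCircle) = 0 := by
      have h := coe_int_addCircle ((k:ℕ):ℤ)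
      rwa [Int.cast_natCast] at h
    rw [h0, sub_zero, hyu]
  rw [hmk]
  simp only [E, Set.mem_iUnion, Finset.mem_coe, Finset.mem_filter, Finset.mem_Icc, exists_prop]
  exact ⟨a', ⟨⟨ha'1, ha'n⟩, hacop'⟩, ⟨y - k, hIoo, hcoe⟩⟩


lemma caseB (ψ : ℕ → ℝ) (hψ : ∀ n, 0 ≤ ψ n) {c : ℝ} (hc : 0 < c)
    (hfreq : ∃ᶠ n in atTop, c * n ≤ ψ n) : W ψ = Set.univ := by
  have hev : ∀ᶠ n : ℕ in atTop,
      0 < n ∧ 2 * (4:ℝ)^(n.primeFactors.card) < c/2 * n - 1 := by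
    obtain ⟨N, hN⟩ := exists_nat_gt (max (4/c) (4 * 16^17 * 16 / (c*c)))
    rw [eventually_atTop]
    refine ⟨max N 1, fun n hn => ?_⟩
    have hn1 : 1 ≤ n := le_trans (le_max_right N 1) hn
    have hn0 : (0:ℝ) < n := by exact_mod_cast hn1
    have hnN : (N:ℝ) ≤ n := by exact_mod_cast le_trans (le_max_left N 1) hn
    refine ⟨hn1, ?_⟩
    have h4c : 4/c ≤ (n:ℝ) := le_trans (le_trans (le_max_left _ _) hN.le) hnN
    rw [div_le_iff₀ hc] at h4c
    have hc4 : 1 ≤ c/4 * n := by linarith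
    have h16 : (16:ℝ)^(n.primeFactors.card) ≤ 16^17 * n := by
      exact_mod_cast om_bound n (by omega)
    have hb : 4*16^17*16/(c*c) < (n:ℝ) :=
      lt_of_lt_of_le (lt_of_le_of_lt (le_max_right _ _) hN) hnN
    rw [div_lt_iff₀ (by positivity)] at hb
    have hquad : 4 * (16:ℝ)^17 * n < (c/4 * n)^2 := by nlinarith
    have hsq : (4:ℝ)^(n.primeFactors.card) * 4^(n.primeFactors.card)
        = 16^(n.primeFactors.card) := by rw [← mul_pow]; norm_num
    have h4pos : (0:ℝ) ≤ 4^(n.primeFactors.card) := by positivity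
    have hab : 2 * (4:ℝ)^(n.primeFactors.card) < c/4 * n := by nlinarith
    linarith
  refine Set.eq_univ_of_forall fun x => ?_
  have hfreq2 := hfreq.and_eventually hev
  exact hfreq2.mono fun n hn => (E_univ ψ hc hn.2.1 hn.1 hn.2.2) ▸ Set.mem_univ x

end GallagherAux

/-- Gallagher's zero-one law: `λ(W(ψ))` is either `0` or `1`. -/
theorem gallagher_zero_one (ψ : ℕ → ℝ) (hψ : ∀ n, 0 ≤ ψ n) :
    volume (W ψ) = 0 ∨ volume (W ψ) = 1 := by
  by_cases hA : Tendsto (fun n => ψ n / n) atTop (nhds 0)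
  · exact caseA ψ hA
  · right
    rw [Metric.tendsto_atTop] at hA
    push_neg at hA
    obtain ⟨ε, hε, hfreq0⟩ := hA
    have hfreq : ∃ᶠ n in atTop, ε * n ≤ ψ n := by
      rw [frequently_atTop]
      intro N
      obtain ⟨n, hnN, hd⟩ := hfreq0 N
      refine ⟨n, hnN, ?_⟩
      rw [Real.dist_eq, sub_zero] at hd
      have hnn : 0 ≤ ψ n / n := div_nonneg (hψ n) (Nat.cast_nonneg n)
      rw [abs_of_nonneg hnn] at hd
      rcases Nat.eq_zero_or_pos n with rfl|hn0
      · simp at hd; linarith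
      · have hn' : (0:ℝ) < n := by exact_mod_cast hn0
        rw [le_div_iff₀ hn'] at hd
        linarith
    rw [caseB ψ hψ hε hfreq]
    exact UnitAddCircle.measure_univ
end
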